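/- For each n ∈ {1, 2, 3}, the set S_n is a connected subset of ℂ². -/

import Mathlib

/-- The monic centered cubic polynomial `P_{a,b}(z) = z^3 - 3 a^2 z + b`. -/
noncomputable def cubicP (a b z : ℂ) : ℂ := z ^ 3 - 3 * a ^ 2 * z + b

/-- `z` has exact (minimal) period `n` under `f`. -/
def HasExactPeriod (f : ℂ → ℂ) (n : ℕ) (z : ℂ) : Prop :=
  f^[n] z = z ∧ ∀ k, 1 ≤ k → k < n → f^[k] z ≠ z

/-- The curve `S_n` of parameters for which the critical point `a` has exact period `n`. -/
def Scurve (n : ℕ) : Set (ℂ × ℂ) :=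
  {p | HasExactPeriod (cubicP p.1 p.2) n p.1}

open Complex Set


noncomputable def qpoly (t : ℂ) : ℂ := -t^4 - 2*t^3 - t^2 - t

def Ecurve : Set (ℂ × ℂ) := {p | p.2^2 = qpoly p.1 ∧ p.1 ≠ 0 ∧ p.1 ≠ -1 ∧ p.2 ≠ 0}

lemma joinedIn_of_fun {X : Type*} [TopologicalSpace X] {E : Set X} (F : ℝ → X)
    (hF : Continuous F) (hmem : ∀ s ∈ Icc (0:ℝ) 1, F s ∈ E) : JoinedIn E (F 0) (F 1) := by
  refine ⟨⟨⟨fun s => F s, hF.comp continuous_subtype_val⟩, rfl, rfl⟩, fun s => hmem s s.2⟩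

noncomputable def hcub (t : ℂ) : ℂ := t^3 + 2*t^2 + t + 1

lemma qpoly_eq (t : ℂ) : qpoly t = -t * hcub t := by simp only [qpoly, hcub]; ring

lemma hcub_close {t : ℂ} (ht : ‖t‖ = 1/9) : ‖hcub t - 1‖ < 1/2 := by
  have h1 : hcub t - 1 = t^3 + 2*t^2 + t := by simp only [hcub]; ring
  rw [h1]
  calc ‖t^3 + 2*t^2 + t‖ ≤ ‖t^3 + 2*t^2‖ + ‖t‖ := norm_add_le _ _
    _ ≤ ‖t^3‖ + ‖2*t^2‖ + ‖t‖ := by gcongr; exact norm_add_le _ _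
    _ = (1/9)^3 + 2*(1/9)^2 + 1/9 := by
        rw [norm_pow, norm_mul, norm_pow]
        simp only [ht]
        norm_num
    _ < 1/2 := by norm_num

lemma hcub_slit {t : ℂ} (ht : ‖t‖ = 1/9) : hcub t ∈ Complex.slitPlane := by
  have h := hcub_close ht
  have := Complex.mem_slitPlane_of_norm_lt_one (z := hcub t - 1) (by linarith)
  simpa using this

lemma hcub_ne {t : ℂ} (ht : ‖t‖ = 1/9) : hcub t ≠ 0 :=
  Complex.slitPlane_ne_zero (hcub_slit ht)

noncomputable def tpath (s : ℝ) : ℂ := (1/9 : ℂ) * Complex.exp ((2*Real.pi*s : ℝ) * Complex.I)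

noncomputable def upath (s : ℝ) : ℂ :=
  Complex.I * (1/3) * Complex.exp ((Real.pi*s : ℝ) * Complex.I) *
    Complex.exp (Complex.log (hcub (tpath s)) / 2)

lemma tpath_abs (s : ℝ) : ‖tpath s‖ = 1/9 := by
  rw [tpath, norm_mul, Complex.norm_exp_ofReal_mul_I]
  norm_num

lemma tpath_cont : Continuous tpath := by
  apply continuous_const.mul
  apply Complex.continuous_exp.comp
  exact (Complex.continuous_ofReal.comp (by continuity)).mul continuous_const

lemma upath_cont : Continuous upath := by
  apply Continuous.mul
  · apply continuous_const.mul
    apply Complex.continuous_exp.comp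
    exact (Complex.continuous_ofReal.comp (by continuity)).mul continuous_const
  · apply Complex.continuous_exp.comp
    apply Continuous.div_const
    have hc : Continuous fun s => hcub (tpath s) := by
      have := tpath_cont
      simp only [hcub]
      fun_prop
    exact hc.clog fun s => hcub_slit (tpath_abs s)

lemma upath_sq (s : ℝ) : (upath s)^2 = qpoly (tpath s) := by
  have hexp2 : (Complex.exp ((Real.pi*s : ℝ) * Complex.I))^2
      = Complex.exp ((2*Real.pi*s : ℝ) * Complex.I) := by
    rw [← Complex.exp_nat_mul]
    congr 1
    push_cast
    ring
  have hlog : (Complex.exp (Complex.log (hcub (tpath s)) / 2))^2 = hcub (tpath s) := by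
    rw [← Complex.exp_nat_mul]
    rw [show (2:ℕ) * (Complex.log (hcub (tpath s)) / 2) = Complex.log (hcub (tpath s)) by
      push_cast; ring]
    exact Complex.exp_log (hcub_ne (tpath_abs s))
  rw [qpoly_eq, upath]
  rw [show (Complex.I * (1/3) * Complex.exp ((Real.pi*s : ℝ) * Complex.I) *
      Complex.exp (Complex.log (hcub (tpath s)) / 2))^2
    = Complex.I^2 * (1/9) * (Complex.exp ((Real.pi*s : ℝ) * Complex.I))^2 *
      (Complex.exp (Complex.log (hcub (tpath s)) / 2))^2 by ring]
  rw [hexp2, hlog, Complex.I_sq, tpath]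
  ring

lemma tpath_mem (s : ℝ) : tpath s ≠ 0 ∧ tpath s ≠ -1 := by
  constructor
  · intro h
    have := tpath_abs s
    rw [h] at this
    simp at this
  · intro h
    have := tpath_abs s
    rw [h] at this
    norm_num at this

lemma upath_ne (s : ℝ) : upath s ≠ 0 := by
  rw [upath]
  apply mul_ne_zero
  apply mul_ne_zero
  apply mul_ne_zero Complex.I_ne_zero
  · norm_num
  · exact Complex.exp_ne_zero _
  · exact Complex.exp_ne_zero _

lemma path_mem_Ecurve (s : ℝ) : (tpath s, upath s) ∈ Ecurve :=
  ⟨upath_sq s, (tpath_mem s).1, (tpath_mem s).2, upath_ne s⟩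

lemma tpath_zero : tpath 0 = 1/9 := by
  rw [tpath]
  norm_num

lemma tpath_one : tpath 1 = 1/9 := by
  rw [tpath]
  rw [show ((2*Real.pi*1 : ℝ) : ℂ) * Complex.I = 2*(Real.pi:ℂ)*Complex.I by push_cast; ring]
  rw [Complex.exp_two_pi_mul_I]
  norm_num

lemma upath_one : upath 1 = -upath 0 := by
  rw [upath, upath, tpath_one, tpath_zero]
  rw [show ((Real.pi*1 : ℝ) : ℂ) * Complex.I = (Real.pi:ℂ)*Complex.I by push_cast; ring]
  rw [Complex.exp_pi_mul_I]
  rw [show ((Real.pi*0 : ℝ) : ℂ) * Complex.I = 0 by push_cast; ring]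
  rw [Complex.exp_zero]
  ring

lemma flip_joined : JoinedIn Ecurve (1/9, upath 0) (1/9, -(upath 0)) := by
  have h := joinedIn_of_fun (fun s => (tpath s, upath s))
    (tpath_cont.prodMk upath_cont) (fun s _ => path_mem_Ecurve s)
  simp only [tpath_zero, tpath_one, upath_one] at h
  exact h
lemma sq_lift (γ : ℝ → ℂ) (hγ : Continuous γ) (hne : ∀ s ∈ Icc (0:ℝ) 1, γ s ≠ 0)
    (u₀ : ℂ) (hu₀ : u₀ ^ 2 = γ 0) :
    ∃ u : ℝ → ℂ, Continuous u ∧ u 0 = u₀ ∧ ∀ s ∈ Icc (0:ℝ) 1, (u s) ^ 2 = γ s := by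
  -- minimum modulus
  obtain ⟨m, hm, hmin⟩ := isCompact_Icc.exists_isMinOn (⟨0, by norm_num⟩ : (Icc (0:ℝ) 1).Nonempty)
    (hγ.norm.continuousOn)
  set ε₀ : ℝ := ‖γ m‖ with hε₀
  have hε₀pos : 0 < ε₀ := norm_pos_iff.mpr (hne m hm)
  -- uniform continuity
  have huc := isCompact_Icc.uniformContinuousOn_of_continuous (hγ.continuousOn (s := Icc (0:ℝ) 1))
  rw [Metric.uniformContinuousOn_iff] at huc
  obtain ⟨δ, hδpos, hδ⟩ := huc ε₀ hε₀pos
  obtain ⟨n, hn⟩ := exists_nat_one_div_lt hδpos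
  set N : ℕ := n + 1 with hN
  have hNpos : (0:ℝ) < N := by positivity
  have hNδ : (1 : ℝ) / N < δ := by exact_mod_cast hn
  have key : ∀ k : ℕ, k ≤ N → ∃ u : ℝ → ℂ, Continuous u ∧ u 0 = u₀ ∧
      ∀ s ∈ Icc (0:ℝ) ((k:ℝ) / N), (u s) ^ 2 = γ s := by
    intro k hk
    induction k with
    | zero =>
      refine ⟨fun _ => u₀, continuous_const, rfl, ?_⟩
      intro s hs
      simp only [Nat.cast_zero, zero_div] at hs
      have : s = 0 := le_antisymm hs.2 hs.1
      rw [this]; exact hu₀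
    | succ k ih =>
      obtain ⟨u, hu, hu0, husq⟩ := ih (by omega)
      set a : ℝ := (k:ℝ) / N with hadef
      set b : ℝ := ((k:ℝ)+1) / N with hbdef
      have ha0 : 0 ≤ a := by positivity
      have hab : a ≤ b := by rw [hadef, hbdef]; gcongr; linarith
      have hb1 : b ≤ 1 := by
        rw [hbdef]
        rw [div_le_one hNpos]
        have : ((k:ℝ)+1) ≤ (N:ℝ) := by exact_mod_cast hk
        linarith
      have ha1 : a ≤ 1 := le_trans hab hb1
      have hamem : a ∈ Icc (0:ℝ) 1 := ⟨ha0, ha1⟩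
      -- local clamp
      set c2 : ℝ → ℝ := fun s => max a (min s b) with hc2def
      have hc2cont : Continuous c2 := continuous_const.max (continuous_id.min continuous_const)
      have hc2mem : ∀ s, c2 s ∈ Icc (0:ℝ) 1 := by
        intro s
        constructor
        · exact le_trans ha0 (le_max_left _ _)
        · rw [hc2def]; simp only
          rw [max_le_iff]
          exact ⟨ha1, le_trans (min_le_right _ _) hb1⟩
      have hc2dist : ∀ s, dist (c2 s) a < δ := by
        intro s
        have h1 : a ≤ c2 s := le_max_left _ _
        have h2 : c2 s ≤ b := max_le hab (min_le_right _ _)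
        rw [Real.dist_eq, _root_.abs_of_nonneg (by linarith : (0:ℝ) ≤ c2 s - a)]
        have : b - a = 1 / N := by rw [hadef, hbdef]; field_simp; ring
        linarith
      have hγa : γ a ≠ 0 := hne a hamem
      set r : ℝ → ℂ := fun s => γ (c2 s) / γ a with hrdef
      have hr1 : ∀ s, ‖r s - 1‖ < 1 := by
        intro s
        have hd := hδ (c2 s) (hc2mem s) a hamem (hc2dist s)
        rw [dist_eq_norm] at hd
        have hεa : ε₀ ≤ ‖γ a‖ := hmin hamem
        have : r s - 1 = (γ (c2 s) - γ a) / γ a := by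
          rw [hrdef]; field_simp
        rw [this, norm_div]
        rw [div_lt_one (norm_pos_iff.mpr hγa)]
        linarith
      have hrslit : ∀ s, r s ∈ Complex.slitPlane := by
        intro s
        have := Complex.mem_slitPlane_of_norm_lt_one (hr1 s)
        simpa using this
      have hrne : ∀ s, r s ≠ 0 := fun s => Complex.slitPlane_ne_zero (hrslit s)
      set e : ℝ → ℂ := fun s => Complex.exp (Complex.log (r s) / 2) with hedef
      have hrcont : Continuous r := ((hγ.comp hc2cont).div_const (γ a))
      have hecont : Continuous e := Complex.continuous_exp.comp ((hrcont.clog hrslit).div_const 2)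
      have hesq : ∀ s, (e s) ^ 2 = r s := by
        intro s
        rw [hedef]
        simp only
        rw [← Complex.exp_nat_mul]
        rw [show (2:ℕ) * (Complex.log (r s) / 2) = Complex.log (r s) by push_cast; ring]
        exact Complex.exp_log (hrne s)
      have hc2a : c2 a = a := by
        rw [hc2def]; simp only
        rw [min_eq_left hab, max_self]
      have hea : e a = 1 := by
        rw [hedef]; simp only
        rw [hrdef]; simp only
        rw [hc2a, div_self hγa, Complex.log_one, zero_div, Complex.exp_zero]
      refine ⟨fun s => if s ≤ a then u s else u a * e s, ?_, ?_, ?_⟩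
      · apply Continuous.if_le hu (continuous_const.mul hecont) continuous_id continuous_const
        intro x hx
        simp only [id_eq] at hx
        rw [hx, Pi.mul_apply, hea, mul_one]
      · simp only [if_pos ha0, hu0]
      · intro s hs
        rw [show ((k+1 : ℕ):ℝ) = (k:ℝ)+1 from by push_cast; ring] at hs
        by_cases hsa : s ≤ a
        · simp only [if_pos hsa]
          exact husq s ⟨hs.1, hsa⟩
        · simp only [if_neg hsa]
          push_neg at hsa
          have hc2s : c2 s = s := by
            rw [hc2def]; simp only
            rw [min_eq_left (show s ≤ b from hs.2), max_eq_right (le_of_lt hsa)]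
          have hua : (u a) ^ 2 = γ a := husq a ⟨ha0, le_refl a⟩
          rw [mul_pow, hua, hesq s, hrdef]
          simp only
          rw [hc2s]
          field_simp
  obtain ⟨u, hu, hu0, husq⟩ := key N le_rfl
  refine ⟨u, hu, hu0, ?_⟩
  intro s hs
  apply husq
  rwa [div_self (ne_of_gt hNpos)]

def Zbad : Set ℂ := {0, -1} ∪ {z | qpoly z = 0}

lemma Zbad_countable : Zbad.Countable := by
  apply Set.Countable.union
  · exact (Set.toFinite _).countable
  · have hP : (Polynomial.X^4 + 2*Polynomial.X^3 + Polynomial.X^2 + Polynomial.X : Polynomial ℂ) ≠ 0 := by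
      intro h
      have := congrArg (Polynomial.eval 1) h
      simp at this
      norm_num at this
    have hfin := Polynomial.finite_setOf_isRoot hP
    apply Set.Countable.mono ?_ hfin.countable
    intro z hz
    simp only [mem_setOf_eq, qpoly] at hz
    simp only [mem_setOf_eq, Polynomial.IsRoot, Polynomial.eval_add, Polynomial.eval_pow,
      Polynomial.eval_mul, Polynomial.eval_ofNat, Polynomial.eval_X]
    linear_combination -hz

lemma notZbad {z : ℂ} (hz : z ∈ Zbadᶜ) : z ≠ 0 ∧ z ≠ -1 ∧ qpoly z ≠ 0 := by
  simp only [Zbad, mem_compl_iff, mem_union, mem_insert_iff, mem_singleton_iff,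
    mem_setOf_eq] at hz
  push_neg at hz
  exact ⟨hz.1.1, hz.1.2, hz.2⟩

lemma Ecurve_pathConnected : IsPathConnected Ecurve := by
  have hbase : ((1/9 : ℂ), upath 0) ∈ Ecurve := by
    have := path_mem_Ecurve 0
    rwa [tpath_zero] at this
  have hw0sq : (upath 0)^2 = qpoly (1/9) := by
    have := upath_sq 0
    rwa [tpath_zero] at this
  have hZ : IsPathConnected (Zbadᶜ) :=
    Zbad_countable.isPathConnected_compl_of_one_lt_rank
      (by rw [Complex.rank_real_complex]; exact Cardinal.one_lt_two)
  have claim : ∀ p ∈ Ecurve,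
      JoinedIn Ecurve p (1/9, upath 0) ∨ JoinedIn Ecurve p (1/9, -(upath 0)) := by
    rintro ⟨t, u⟩ ⟨hsq, ht0, ht1, hu0⟩
    have htZ : t ∈ Zbadᶜ := by
      simp only [Zbad, mem_compl_iff, mem_union, mem_insert_iff, mem_singleton_iff,
        mem_setOf_eq]
      push_neg
      refine ⟨⟨ht0, ht1⟩, ?_⟩
      rw [← hsq]
      exact pow_ne_zero 2 hu0
    have h9Z : (1/9 : ℂ) ∈ Zbadᶜ := by
      simp only [Zbad, mem_compl_iff, mem_union, mem_insert_iff, mem_singleton_iff,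
        mem_setOf_eq]
      push_neg
      refine ⟨⟨by norm_num, by norm_num⟩, ?_⟩
      rw [qpoly]
      norm_num
    obtain ⟨p, hpmem⟩ := hZ.joinedIn t htZ (1/9) h9Z
    set γf : ℝ → ℂ := fun s => qpoly (p.extend s) with hγf
    have hγcont : Continuous γf := by
      have hq : Continuous qpoly := by unfold qpoly; fun_prop
      exact hq.comp p.continuous_extend
    have hγne : ∀ s ∈ Icc (0:ℝ) 1, γf s ≠ 0 := by
      intro s hs
      rw [hγf]
      simp only
      rw [p.extend_apply hs]
      exact (notZbad (hpmem ⟨s, hs⟩)).2.2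
    have hu₀ : u ^ 2 = γf 0 := by
      rw [hγf]
      simp only
      rw [Path.extend_zero]
      exact hsq
    obtain ⟨U, hUc, hU0, hUsq⟩ := sq_lift γf hγcont hγne u hu₀
    have hmem : ∀ s ∈ Icc (0:ℝ) 1, (p.extend s, U s) ∈ Ecurve := by
      intro s hs
      have h1 : U s ^ 2 = qpoly (p.extend s) := hUsq s hs
      have h3 : qpoly (p.extend s) ≠ 0 := by
        rw [p.extend_apply hs]
        exact (notZbad (hpmem ⟨s, hs⟩)).2.2
      refine ⟨h1, ?_, ?_, ?_⟩
      · show p.extend s ≠ 0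
        rw [p.extend_apply hs]; exact (notZbad (hpmem ⟨s, hs⟩)).1
      · show p.extend s ≠ -1
        rw [p.extend_apply hs]; exact (notZbad (hpmem ⟨s, hs⟩)).2.1
      · show U s ≠ 0
        intro h
        rw [h] at h1
        simp at h1
        exact h3 h1.symm
    have J : JoinedIn Ecurve (t, u) (1/9, U 1) := by
      have h := joinedIn_of_fun (fun s => (p.extend s, U s))
        (p.continuous_extend.prodMk hUc) hmem
      simpa [Path.extend_zero, Path.extend_one, hU0] using h
    have hU1 : U 1 ^ 2 = qpoly (1/9) := by
      have := hUsq 1 ⟨by norm_num, le_refl 1⟩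
      rw [hγf] at this
      simp only at this
      rwa [Path.extend_one] at this
    have hcases : (U 1 - upath 0) * (U 1 + upath 0) = 0 := by
      linear_combination hU1 - hw0sq
    rcases mul_eq_zero.mp hcases with h | h
    · left
      rw [sub_eq_zero] at h
      rwa [← h]
    · right
      have : U 1 = -(upath 0) := by linear_combination h
      rwa [← this]
  refine ⟨(1/9, upath 0), hbase, ?_⟩
  intro y hy
  rcases claim y hy with h | h
  · exact h.symm
  · exact (flip_joined.trans h.symm)

lemma iter2 (f : ℂ → ℂ) (x : ℂ) : f^[2] x = f (f x) := by
  rw [show (2:ℕ) = 1+1 from rfl, Function.iterate_succ_apply', Function.iterate_one]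

lemma iter3 (f : ℂ → ℂ) (x : ℂ) : f^[3] x = f (f (f x)) := by
  rw [show (3:ℕ) = 2+1 from rfl, Function.iterate_succ_apply', iter2]

lemma alg_forward (t x a : ℂ) (hx0 : x ≠ 0) (ht1 : t + 1 ≠ 0)
    (ha : 3*a*x = x^2 - t) (hR : t*(1+t)^2*(x^2+1) = -1) :
    HasExactPeriod (cubicP a (a + 2*a^3 - x)) 3 a := by
  have hstep1 : cubicP a (a + 2*a^3 - x) a = a - x := by
    simp only [cubicP]; ring
  have hstep2 : cubicP a (a + 2*a^3 - x) (a - x) = a - x - t*x := by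
    simp only [cubicP]; linear_combination x * ha
  have hstep3 : cubicP a (a + 2*a^3 - x) (a - x - t*x) = a := by
    have key : (cubicP a (a + 2*a^3 - x) (a - x - t*x) - a) * x = 0 := by
      simp only [cubicP]
      linear_combination (x^2*(1+t)^2) * ha + (-(x^2)) * hR
    rcases mul_eq_zero.mp key with h | h
    · exact sub_eq_zero.mp h
    · exact absurd h hx0
  constructor
  · rw [iter3, hstep1, hstep2, hstep3]
  · intro k hk1 hk3
    interval_cases k
    · rw [Function.iterate_one, hstep1]
      intro hcon
      exact hx0 (by linear_combination -hcon)
    · rw [iter2, hstep1, hstep2]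
      intro hcon
      have hxt : x*(1+t) = 0 := by linear_combination -hcon
      rcases mul_eq_zero.mp hxt with h | h
      · exact hx0 h
      · exact ht1 (by linear_combination h)

noncomputable def Amap (p : ℂ × ℂ) : ℂ := p.2/(3*p.1*(p.1+1)) - p.1^2*(p.1+1)/(3*p.2)

noncomputable def Phi (p : ℂ × ℂ) : ℂ × ℂ :=
  (Amap p, Amap p + 2*(Amap p)^3 - p.2/(p.1*(p.1+1)))

lemma Phi_contOn : ContinuousOn Phi Ecurve := by
  have h1 : ∀ p ∈ Ecurve, 3*p.1*(p.1+1) ≠ 0 := by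
    rintro ⟨t, u⟩ ⟨_, ht0, ht1, _⟩
    refine mul_ne_zero (mul_ne_zero (by norm_num) ht0) ?_
    intro h; exact ht1 (by linear_combination h)
  have h2 : ∀ p ∈ Ecurve, (3:ℂ)*p.2 ≠ 0 := by
    rintro ⟨t, u⟩ ⟨_, _, _, hu0⟩
    exact mul_ne_zero (by norm_num) hu0
  have h3 : ∀ p ∈ Ecurve, p.1*(p.1+1) ≠ 0 := by
    rintro ⟨t, u⟩ ⟨_, ht0, ht1, _⟩
    refine mul_ne_zero ht0 ?_
    intro h; exact ht1 (by linear_combination h)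
  have hA : ContinuousOn Amap Ecurve := by
    apply ContinuousOn.sub
    · exact continuousOn_snd.div (by fun_prop) h1
    · exact ContinuousOn.div (by fun_prop) (by fun_prop) (fun p hp => by
        have := h2 p hp
        intro hc
        exact this (by rw [show (3:ℂ)*p.2 = 3*p.2 from rfl]; exact_mod_cast hc))
  apply ContinuousOn.prodMk hA
  apply ContinuousOn.sub
  apply ContinuousOn.add hA
  · exact (continuousOn_const.mul (hA.pow 3))
  · exact continuousOn_snd.div (by fun_prop) h3

lemma image_subset_Scurve3 : Phi '' Ecurve ⊆ Scurve 3 := by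
  rintro _ ⟨⟨t, u⟩, hp, rfl⟩
  obtain ⟨hsq, ht0', ht1, hu0'⟩ := hp
  simp only [qpoly] at hsq
  have ht0 : t ≠ 0 := ht0'
  have hu0 : u ≠ 0 := hu0'
  have ht1' : t + 1 ≠ 0 := by
    intro h; exact ht1 (show t = -1 by linear_combination h)
  have htt : t*(t+1) ≠ 0 := mul_ne_zero ht0 ht1'
  have hxu : u = (u/(t*(t+1)))*(t*(t+1)) := by field_simp
  have hx0 : u/(t*(t+1)) ≠ 0 := div_ne_zero hu0 htt
  rw [hxu] at hsq
  generalize hxg : u/(t*(t+1)) = x at hsq hx0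
  rw [show ((t,u) : ℂ × ℂ) = (t, x*(t*(t+1))) by rw [← hxg, ← hxu]]
  have ha : 3*(Amap (t, x*(t*(t+1))))*x = x^2 - t := by
    simp only [Amap]
    field_simp
  have hR : t*(1+t)^2*(x^2+1) = -1 := by
    have h1 : t*((t*(1+t)^2*(x^2+1)) + 1) = 0 := by linear_combination hsq
    have h2 := (mul_eq_zero.mp h1).resolve_left ht0
    linear_combination h2
  have hdiv : (x*(t*(t+1)))/(t*(t+1)) = x := by field_simp
  simp only [Scurve, Phi, mem_setOf_eq]
  simp only [hdiv]
  exact alg_forward t x _ hx0 ht1' ha hR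

lemma Scurve3_subset_image : Scurve 3 ⊆ Phi '' Ecurve := by
  rintro ⟨a, b⟩ hp
  obtain ⟨hper, hne⟩ := hp
  simp only at hper hne
  have h1 : cubicP a b a ≠ a := by
    have := hne 1 (by norm_num) (by norm_num)
    rwa [Function.iterate_one] at this
  have h2 : cubicP a b (cubicP a b a) ≠ a := by
    have := hne 2 (by norm_num) (by norm_num)
    rwa [iter2] at this
  have h3 : cubicP a b (cubicP a b (cubicP a b a)) = a := by
    rw [iter3] at hper; exact hper
  obtain ⟨z1, hz1⟩ : ∃ z, cubicP a b a = z := ⟨_, rfl⟩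
  obtain ⟨z2, hz2⟩ : ∃ z, cubicP a b z1 = z := ⟨_, rfl⟩
  rw [hz1] at h3 h2
  rw [hz2] at h3
  rw [hz1] at h1
  -- h1 : z1 ≠ a, h2 : cubicP a b z1 ≠ a → z2 ≠ a, h3 : cubicP a b z2 = a
  rw [hz2] at h2
  obtain ⟨x, hx⟩ : ∃ x, a - z1 = x := ⟨_, rfl⟩
  obtain ⟨y, hy⟩ : ∃ y, z1 - z2 = y := ⟨_, rfl⟩
  have hx0 : x ≠ 0 := by
    rw [← hx]; intro h; exact h1 (by linear_combination -h)
  have hy0 : y ≠ 0 := by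
    rw [← hy]; intro h
    have hz12 : z1 = z2 := by linear_combination h
    rw [hz12] at hz2
    exact h2 (by rw [← hz2]; exact h3)
  have hxy0 : x + y ≠ 0 := by
    rw [← hx, ← hy]; intro h; exact h2 (by linear_combination -h)
  have hAeq : 3*a*x^2 = x^3 - y := by
    rw [← hx, ← hy, ← hz2, ← hz1]
    simp only [cubicP]; ring
  have hBeq : x = (x+y)^2*(3*a - x - y) := by
    rw [← hx, ← hy]
    simp only [cubicP] at h3 hz1
    linear_combination hz1 - h3
  have hpoly : y*(x+y)^2*(x^2+1) = -(x^3) := by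
    linear_combination x^2 * hBeq + (x+y)^2 * hAeq
  obtain ⟨t, ht⟩ : ∃ t, y/x = t := ⟨_, rfl⟩
  have hyx : y = t*x := by rw [← ht]; field_simp
  obtain ⟨u, hu⟩ : ∃ u, y*(x+y)/x = u := ⟨_, rfl⟩
  have hux : u*x = y*(x+y) := by rw [← hu]; field_simp
  have hueq : u = t*x*(1+t) := by
    apply mul_right_cancel₀ hx0
    rw [hux, hyx]; ring
  have ht0 : t ≠ 0 := by
    intro h; rw [h, zero_mul] at hyx; exact hy0 hyx
  have ht1' : t + 1 ≠ 0 := by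
    intro h
    have htm : t = -1 := by linear_combination h
    rw [htm] at hyx
    exact hxy0 (by linear_combination hyx)
  have ht1 : t ≠ -1 := by
    intro h; exact ht1' (by linear_combination h)
  have hu0 : u ≠ 0 := by
    intro h
    rw [h, zero_mul] at hux
    exact (mul_ne_zero hy0 hxy0) hux.symm
  have hR : t*(1+t)^2*(x^2+1) = -1 := by
    have hpoly' : (t*(1+t)^2*(x^2+1) + 1)*x^3 = 0 := by
      rw [hyx] at hpoly
      linear_combination hpoly
    have h5 := (mul_eq_zero.mp hpoly').resolve_right (pow_ne_zero 3 hx0)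
    linear_combination h5
  have husq : u^2 = qpoly t := by
    simp only [qpoly]
    rw [hueq]
    linear_combination t * hR
  refine ⟨(t, u), ⟨husq, ht0, ht1, hu0⟩, ?_⟩
  have htt : t*(t+1) ≠ 0 := mul_ne_zero ht0 ht1'
  have hdiv : u/(t*(t+1)) = x := by
    rw [div_eq_iff htt, hueq]; ring
  have haeq2 : 3*a*x = x^2 - t := by
    have h6 : (3*a*x - x^2 + t)*x = 0 := by
      rw [hyx] at hAeq
      linear_combination hAeq
    have h7 := (mul_eq_zero.mp h6).resolve_right hx0
    linear_combination h7
  have hden1 : (3:ℂ)*t*(t+1) ≠ 0 := mul_ne_zero (mul_ne_zero (by norm_num) ht0) ht1'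
  have hden2 : (3:ℂ)*u ≠ 0 := mul_ne_zero (by norm_num) hu0
  have hAa : Amap (t, u) = a := by
    have hAmap : Amap (t, u)
        = (u*(3*u) - (3*t*(t+1))*(t^2*(t+1)))/((3*t*(t+1))*(3*u)) := by
      simp only [Amap]
      rw [div_sub_div _ _ hden1 hden2]
    rw [hAmap, div_eq_iff (mul_ne_zero hden1 hden2), hueq]
    linear_combination (-3*t^2*(1+t)^2) * haeq2
  have hb : b = a + 2*a^3 - x := by
    simp only [cubicP] at hz1
    rw [← hx]
    linear_combination hz1
  simp only [Phi]
  rw [hAa, hdiv, ← hb]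

lemma Scurve3_conn : IsConnected (Scurve 3) := by
  have h : Scurve 3 = Phi '' Ecurve :=
    Set.Subset.antisymm Scurve3_subset_image image_subset_Scurve3
  rw [h]
  exact Ecurve_pathConnected.isConnected.image Phi Phi_contOn

lemma Scurve1_conn : IsConnected (Scurve 1) := by
  have h : Scurve 1 = (fun a : ℂ => (a, a + 2*a^3)) '' Set.univ := by
    ext ⟨a, b⟩
    simp only [Scurve, mem_setOf_eq, image_univ, Set.mem_range]
    constructor
    · rintro ⟨hper, -⟩
      rw [Function.iterate_one] at hper
      simp only [cubicP] at hper
      exact ⟨a, by rw [Prod.mk.injEq]; exact ⟨rfl, by linear_combination -hper⟩⟩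
    · rintro ⟨c, hc⟩
      rw [Prod.mk.injEq] at hc
      obtain ⟨rfl, rfl⟩ := hc
      constructor
      · rw [Function.iterate_one]; simp only [cubicP]; ring
      · intro k hk1 hk2; omega
  rw [h]
  exact isConnected_univ.image _ (Continuous.continuousOn (by fun_prop))

lemma Scurve2_conn : IsConnected (Scurve 2) := by
  have h : Scurve 2 =
      (fun u : ℂ => ((u + u⁻¹)/3, (u - 2*u⁻¹)/3 + 2*((u + u⁻¹)/3)^3)) '' {(0:ℂ)}ᶜ := by
    ext ⟨a, b⟩
    constructor
    · rintro ⟨hper, hne⟩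
      simp only at hper hne
      have h1 : cubicP a b a ≠ a := by
        have := hne 1 (by norm_num) (by norm_num)
        rwa [Function.iterate_one] at this
      have hper2 : cubicP a b (cubicP a b a) = a := by
        rw [iter2] at hper; exact hper
      obtain ⟨w, hw⟩ : ∃ w, cubicP a b a = w := ⟨_, rfl⟩
      rw [hw] at h1 hper2
      simp only [cubicP] at hw hper2
      have hb : b = w + 2*a^3 := by linear_combination hw
      have hkey : (w - a)*((w+2*a)*(w-a) + 1) = 0 := by
        linear_combination hper2 - hw
      have hwa : w - a ≠ 0 := sub_ne_zero.mpr h1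
      have hquad : (w+2*a)*(w-a) = -1 := by
        have := (mul_eq_zero.mp hkey).resolve_left hwa
        linear_combination this
      have hu0 : w + 2*a ≠ 0 := by
        intro hz
        rw [hz, zero_mul] at hquad
        norm_num at hquad
      have hmul1 : (w + 2*a) * (a - w) = 1 := by linear_combination -hquad
      have hinv : (w + 2*a)⁻¹ = a - w := inv_eq_of_mul_eq_one_right hmul1
      refine ⟨w + 2*a, hu0, ?_⟩
      rw [Prod.mk.injEq]
      constructor
      · rw [hinv]; ring
      · rw [hinv]; linear_combination -hb
    · rintro ⟨u, hu0, heq⟩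
      rw [← heq]
      simp only [Scurve, mem_setOf_eq]
      have hu0' : u ≠ 0 := hu0
      have hinv : u * u⁻¹ = 1 := mul_inv_cancel₀ hu0'
      have hstep1 : cubicP ((u + u⁻¹)/3) ((u - 2*u⁻¹)/3 + 2*((u + u⁻¹)/3)^3) ((u + u⁻¹)/3)
          = (u - 2*u⁻¹)/3 := by
        simp only [cubicP]; ring
      have hstep2 : cubicP ((u + u⁻¹)/3) ((u - 2*u⁻¹)/3 + 2*((u + u⁻¹)/3)^3) ((u - 2*u⁻¹)/3)
          = (u + u⁻¹)/3 := by
        simp only [cubicP]; linear_combination u⁻¹ * hinv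
      have hwa : (u - 2*u⁻¹)/3 ≠ (u + u⁻¹)/3 := by
        intro h
        have : u⁻¹ = 0 := by linear_combination -h
        exact inv_ne_zero hu0' this
      constructor
      · show (cubicP _ _)^[2] _ = _
        rw [iter2, hstep1, hstep2]
      · intro k hk1 hk2
        have : k = 1 := by omega
        subst this
        rw [Function.iterate_one]
        show cubicP _ _ _ ≠ _
        rw [hstep1]
        exact hwa
  rw [h]
  apply IsConnected.image ?_ _ ?_
  · exact (isPathConnected_compl_singleton_of_one_lt_rank
      (by rw [Complex.rank_real_complex]; exact Cardinal.one_lt_two) 0).isConnected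
  · apply ContinuousOn.prodMk
    · apply ContinuousOn.div_const
      exact continuousOn_id.add (continuousOn_id.inv₀ (fun x hx => hx))
    · apply ContinuousOn.add
      · apply ContinuousOn.div_const
        exact continuousOn_id.sub ((continuousOn_id.inv₀ (fun x hx => hx)).const_smul (2:ℂ))
      · apply ContinuousOn.mul continuousOn_const
        apply ContinuousOn.pow
        apply ContinuousOn.div_const
        exact continuousOn_id.add (continuousOn_id.inv₀ (fun x hx => hx))

theorem stmt_16 : ∀ n : ℕ, n = 1 ∨ n = 2 ∨ n = 3 → IsConnected (Scurve n) := by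
  rintro n (rfl | rfl | rfl)
  · exact Scurve1_conn
  · exact Scurve2_conn
  · exact Scurve3_conn
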